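/- arXiv:2304.04221 — 7 statements merged into one kernel-verified Lean document; each statement's English description precedes it below -/
import Mathlib

section
/- Let X be a p-dimensional random row vector and Y a square-integrable real random variable with positive variance, with Σ_XX positive definite and Σ_XY ≠ 0, and set γ = √(Σ_YX Σ_XX⁻¹ Σ_XY)/σ_Y. Then for every intercept α ∈ ℝ and coefficient vector β ∈ ℝ^p, the concordance correlation coefficient of Y with the linear predictor α + X·β satisfies CCC(Y, α + X·β) ≤ γ. -/
open MeasureTheory ProbabilityTheory Matrix

/-- Expectation of a real random variable with respect to the ambient measure. -/
noncomputable def pMean {Ω : Type*} [MeasureSpace Ω] (U : Ω → ℝ) : ℝ := ∫ ω, U ω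

/-- Covariance of two real random variables. -/
noncomputable def pCov {Ω : Type*} [MeasureSpace Ω] (U V : Ω → ℝ) : ℝ :=
  ∫ ω, (U ω - pMean U) * (V ω - pMean V)

/-- Variance of a real random variable. -/
noncomputable def pVar {Ω : Type*} [MeasureSpace Ω] (U : Ω → ℝ) : ℝ := pCov U U

/-- Lin's concordance correlation coefficient. -/
noncomputable def CCC {Ω : Type*} [MeasureSpace Ω] (U V : Ω → ℝ) : ℝ :=
  2 * pCov U V / (pVar U + pVar V + (pMean U - pMean V) ^ 2)

lemma integrable_mul2 {Ω : Type*} [MeasureSpace Ω] {f g : Ω → ℝ}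
    (hf : MemLp f 2 ℙ) (hg : MemLp g 2 ℙ) :
    Integrable (fun ω => f ω * g ω) ℙ := by
  have : MemLp (f • g) 1 ℙ := hg.smul hf (hpqr := ⟨by simp [ENNReal.inv_two_add_inv_two]⟩)
  exact memLp_one_iff_integrable.mp this

/-- Matrix Cauchy–Schwarz with respect to a positive definite matrix. -/
lemma matrix_cs {p : ℕ} (A : Matrix (Fin p) (Fin p) ℝ) (hPD : A.PosDef)
    (u β : Fin p → ℝ) :
    (u ⬝ᵥ β) ^ 2 ≤ (u ⬝ᵥ (A⁻¹ *ᵥ u)) * (β ⬝ᵥ (A *ᵥ β)) := by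
  set w : Fin p → ℝ := A⁻¹ *ᵥ u with hwdef
  have hdet : IsUnit A.det := hPD.det_pos.ne'.isUnit
  have hw : A *ᵥ w = u := by
    rw [hwdef, Matrix.mulVec_mulVec, Matrix.mul_nonsing_inv A hdet, Matrix.one_mulVec]
  have hsymm : Aᵀ = A := by
    have := hPD.isHermitian.eq
    rwa [Matrix.conjTranspose_eq_transpose_of_trivial] at this
  have hwAβ : w ⬝ᵥ (A *ᵥ β) = u ⬝ᵥ β := by
    rw [Matrix.dotProduct_mulVec, ← Matrix.mulVec_transpose, hsymm, hw]
  have hwAw : w ⬝ᵥ (A *ᵥ w) = u ⬝ᵥ w := by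
    rw [hw, dotProduct_comm]
  have hβAw : β ⬝ᵥ (A *ᵥ w) = u ⬝ᵥ β := by
    rw [hw, dotProduct_comm]
  have key : ∀ t : ℝ, 0 ≤ (u ⬝ᵥ w) * (t * t) + (-(2 * (u ⬝ᵥ β))) * t + β ⬝ᵥ (A *ᵥ β) := by
    intro t
    have hz : 0 ≤ (β - t • w) ⬝ᵥ (A *ᵥ (β - t • w)) := by
      have := hPD.posSemidef.dotProduct_mulVec_nonneg (β - t • w); rwa [star_trivial] at this
    have expand : (β - t • w) ⬝ᵥ (A *ᵥ (β - t • w)) =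
        β ⬝ᵥ (A *ᵥ β) - t * (β ⬝ᵥ (A *ᵥ w)) - t * (w ⬝ᵥ (A *ᵥ β))
          + t * t * (w ⬝ᵥ (A *ᵥ w)) := by
      simp only [Matrix.mulVec_sub, Matrix.mulVec_smul, dotProduct_sub,
        sub_dotProduct, dotProduct_smul, smul_dotProduct,
        smul_eq_mul]
      ring
    rw [expand, hwAβ, hβAw, hwAw] at hz
    linarith
  have h := discrim_le_zero key
  unfold discrim at h
  nlinarith [h]

/-- For every linear predictor `α + X·β`, the concordance correlation
coefficient with `Y` is at most `γ = √(Σ_YX Σ_XX⁻¹ Σ_XY)/σ_Y`. -/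
theorem ccc_linear_le_gamma {Ω : Type*} [MeasureSpace Ω]
    [IsProbabilityMeasure (ℙ : Measure Ω)] {p : ℕ} (hp : 0 < p)
    (X : Ω → Fin p → ℝ) (Y : Ω → ℝ)
    (hX : ∀ j, MemLp (fun ω => X ω j) 2 ℙ) (hY : MemLp Y 2 ℙ)
    (hvar : 0 < pVar Y)
    (SigXX : Matrix (Fin p) (Fin p) ℝ)
    (hSigXX : SigXX = Matrix.of fun j l => pCov (fun ω => X ω j) (fun ω => X ω l))
    (hPD : SigXX.PosDef)
    (SigXY : Fin p → ℝ) (hSigXY : SigXY = fun j => pCov (fun ω => X ω j) Y)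
    (hne : SigXY ≠ 0)
    (γ : ℝ) (hγ : γ = Real.sqrt (SigXY ⬝ᵥ (SigXX⁻¹ *ᵥ SigXY)) / Real.sqrt (pVar Y)) :
    ∀ (α : ℝ) (β : Fin p → ℝ), CCC Y (fun ω => α + X ω ⬝ᵥ β) ≤ γ := by
  intro α β
  set μ : Fin p → ℝ := fun j => pMean (fun ω => X ω j) with hμ
  set μY : ℝ := pMean Y with hμY
  set V : Ω → ℝ := fun ω => α + X ω ⬝ᵥ β with hV
  -- basic integrability
  have hXi : ∀ j, Integrable (fun ω => X ω j) ℙ := fun j => (hX j).integrable one_le_two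
  have hYc : MemLp (fun ω => Y ω - μY) 2 ℙ := hY.sub (memLp_const μY)
  have hXc : ∀ j, MemLp (fun ω => X ω j - μ j) 2 ℙ :=
    fun j => (hX j).sub (memLp_const (μ j))
  -- mean of V
  have hMeanV : pMean V = α + ∑ j, μ j * β j := by
    have hint : ∀ j ∈ Finset.univ, Integrable (fun ω => X ω j * β j) ℙ :=
      fun j _ => (hXi j).mul_const (β j)
    rw [hV]
    unfold pMean
    simp only [dotProduct]
    rw [integral_add (integrable_const α) (integrable_finset_sum _ hint),
      integral_const, integral_finset_sum _ hint]
    simp only [measure_univ, probReal_univ, smul_eq_mul, one_mul]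
    congr 1
    exact Finset.sum_congr rfl fun j _ => by rw [integral_mul_const]; rfl
  -- centering identity
  have hcenter : ∀ ω, V ω - pMean V = ∑ j, (X ω j - μ j) * β j := by
    intro ω
    rw [hMeanV]
    have : ∑ j, (X ω j - μ j) * β j = (∑ j, X ω j * β j) - ∑ j, μ j * β j := by
      rw [← Finset.sum_sub_distrib]
      exact Finset.sum_congr rfl fun j _ => by ring
    rw [this]
    simp only [hV, dotProduct]
    ring
  -- covariance with V
  have hCovYV : pCov Y V = SigXY ⬝ᵥ β := by
    unfold pCov
    have e : ∀ ω, (Y ω - pMean Y) * (V ω - pMean V) =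
        ∑ j, ((Y ω - μY) * (X ω j - μ j)) * β j := by
      intro ω
      rw [hcenter ω, Finset.mul_sum]
      exact Finset.sum_congr rfl fun j _ => by rw [hμY]; ring
    simp only [e]
    rw [integral_finset_sum _ (fun j _ => (integrable_mul2 hYc (hXc j)).mul_const (β j))]
    rw [hSigXY, dotProduct]
    refine Finset.sum_congr rfl fun j _ => ?_
    rw [integral_mul_const]
    congr 1
    unfold pCov
    exact integral_congr_ae (Filter.Eventually.of_forall fun ω => by rw [hμY]; ring)
  -- variance of V
  have hVarV : pVar V = β ⬝ᵥ (SigXX *ᵥ β) := by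
    unfold pVar pCov
    have e : ∀ ω, (V ω - pMean V) * (V ω - pMean V) =
        ∑ j, ∑ l, ((X ω j - μ j) * (X ω l - μ l)) * (β j * β l) := by
      intro ω
      rw [hcenter ω, Finset.sum_mul_sum]
      exact Finset.sum_congr rfl fun j _ => Finset.sum_congr rfl fun l _ => by ring
    simp only [e]
    rw [integral_finset_sum _ (fun j _ => integrable_finset_sum _
      (fun l _ => (integrable_mul2 (hXc j) (hXc l)).mul_const (β j * β l)))]
    rw [dotProduct]
    refine Finset.sum_congr rfl fun j _ => ?_
    rw [integral_finset_sum _ (fun l _ => (integrable_mul2 (hXc j) (hXc l)).mul_const (β j * β l)),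
      Matrix.mulVec, dotProduct, Finset.mul_sum]
    refine Finset.sum_congr rfl fun l _ => ?_
    rw [integral_mul_const, hSigXX]
    simp only [Matrix.of_apply]
    unfold pCov
    ring
  -- abbreviations
  set s : ℝ := pVar Y with hs
  set v : ℝ := pVar V with hvv
  set c : ℝ := pCov Y V with hcc
  set d : ℝ := (pMean Y - pMean V) ^ 2 with hd
  set q : ℝ := SigXY ⬝ᵥ (SigXX⁻¹ *ᵥ SigXY) with hq
  have hd0 : 0 ≤ d := sq_nonneg _
  have hq0 : 0 < q := by
    have := hPD.inv.dotProduct_mulVec_pos hne; rwa [star_trivial] at this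
  have hv0 : 0 ≤ v := by rw [hVarV]; have := hPD.posSemidef.dotProduct_mulVec_nonneg β; rwa [star_trivial] at this
  have hcs : c ^ 2 ≤ q * v := by
    rw [hCovYV, hVarV, hq]
    exact matrix_cs SigXX hPD SigXY β
  have hccc : CCC Y V = 2 * c / (s + v + d) := rfl
  rw [hccc, hγ]
  rcases le_or_gt c 0 with hc | hc
  · have h1 : 2 * c / (s + v + d) ≤ 0 :=
      div_nonpos_of_nonpos_of_nonneg (by linarith) (by linarith)
    have h2 : 0 ≤ Real.sqrt q / Real.sqrt s :=
      div_nonneg (Real.sqrt_nonneg _) (Real.sqrt_nonneg _)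
    linarith
  · have hv : 0 < v := by
      by_contra h
      push_neg at h
      have : q * v ≤ 0 := mul_nonpos_of_nonneg_of_nonpos hq0.le h
      nlinarith [pow_pos hc 2]
    have hsq : 0 < Real.sqrt s := Real.sqrt_pos.mpr hvar
    have hvq : 0 < Real.sqrt v := Real.sqrt_pos.mpr hv
    have hc_le : c ≤ Real.sqrt q * Real.sqrt v := by
      have h1 : Real.sqrt (c ^ 2) ≤ Real.sqrt (q * v) := Real.sqrt_le_sqrt hcs
      rw [Real.sqrt_sq hc.le, Real.sqrt_mul hq0.le] at h1
      exact h1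
    rw [div_le_div_iff₀ (by linarith) hsq]
    have hss : Real.sqrt s * Real.sqrt s = s := Real.mul_self_sqrt hvar.le
    have hvvs : Real.sqrt v * Real.sqrt v = v := Real.mul_self_sqrt hv.le
    nlinarith [sq_nonneg (Real.sqrt s - Real.sqrt v), Real.sqrt_nonneg q,
      mul_le_mul_of_nonneg_right hc_le hsq.le,
      mul_nonneg (Real.sqrt_nonneg q) hd0,
      mul_le_mul_of_nonneg_left (sq_nonneg (Real.sqrt s - Real.sqrt v)) (Real.sqrt_nonneg q)]
end

section
/- Let X be a p-dimensional random row vector and Y a square-integrable real random variable with positive variance, with Σ_XX positive definite and Σ_XY ≠ 0, and set γ = √(Σ_YX Σ_XX⁻¹ Σ_XY)/σ_Y, β* = (σ_Y/√(Σ_YX Σ_XX⁻¹ Σ_XY))·Σ_XX⁻¹Σ_XY and α* = μ_Y − μ_X·β*. Then the concordance correlation coefficient of Y with the maximum agreement linear predictor α* + X·β* equals γ: CCC(Y, α* + X·β*) = γ. -/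
open MeasureTheory ProbabilityTheory Matrix

private lemma l2_mul_integrable {Ω : Type*} [MeasureSpace Ω]
    [IsProbabilityMeasure (ℙ : Measure Ω)]
    {f g : Ω → ℝ} (hf : MemLp f 2 ℙ) (hg : MemLp g 2 ℙ) :
    Integrable (fun ω => f ω * g ω) := by
  have h : MemLp (f • g) 1 ℙ := hg.smul hf
  exact h.integrable le_rfl

/-- The maximum agreement linear predictor `α* + X·β*` attains
concordance correlation coefficient `γ = √(Σ_YX Σ_XX⁻¹ Σ_XY)/σ_Y` with `Y`. -/
theorem ccc_malp_eq_gamma {Ω : Type*} [MeasureSpace Ω]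
    [IsProbabilityMeasure (ℙ : Measure Ω)] {p : ℕ} (hp : 0 < p)
    (X : Ω → Fin p → ℝ) (Y : Ω → ℝ)
    (hX : ∀ j, MemLp (fun ω => X ω j) 2 ℙ) (hY : MemLp Y 2 ℙ)
    (hvar : 0 < pVar Y)
    (μX : Fin p → ℝ) (hμX : μX = fun j => pMean (fun ω => X ω j))
    (μY : ℝ) (hμY : μY = pMean Y)
    (SigXX : Matrix (Fin p) (Fin p) ℝ)
    (hSigXX : SigXX = Matrix.of fun j l => pCov (fun ω => X ω j) (fun ω => X ω l))
    (hPD : SigXX.PosDef)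
    (SigXY : Fin p → ℝ) (hSigXY : SigXY = fun j => pCov (fun ω => X ω j) Y)
    (hne : SigXY ≠ 0)
    (γ : ℝ) (hγ : γ = Real.sqrt (SigXY ⬝ᵥ (SigXX⁻¹ *ᵥ SigXY)) / Real.sqrt (pVar Y))
    (βstar : Fin p → ℝ)
    (hβstar : βstar = (Real.sqrt (pVar Y) / Real.sqrt (SigXY ⬝ᵥ (SigXX⁻¹ *ᵥ SigXY))) •
      (SigXX⁻¹ *ᵥ SigXY))
    (αstar : ℝ) (hαstar : αstar = μY - μX ⬝ᵥ βstar) :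
    CCC Y (fun ω => αstar + X ω ⬝ᵥ βstar) = γ := by
  classical
  have hXi : ∀ j, Integrable (fun ω => X ω j) := fun j => (hX j).integrable one_le_two
  have hdX2 : ∀ j, MemLp (fun ω => X ω j - μX j) 2 ℙ :=
    fun j => (hX j).sub (memLp_const _)
  have hdY2 : MemLp (fun ω => Y ω - μY) 2 ℙ := hY.sub (memLp_const _)
  have hIYX : ∀ j, Integrable (fun ω => (Y ω - μY) * (X ω j - μX j)) :=
    fun j => l2_mul_integrable hdY2 (hdX2 j)
  have hIXX : ∀ j l, Integrable (fun ω => (X ω j - μX j) * (X ω l - μX l)) :=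
    fun j l => l2_mul_integrable (hdX2 j) (hdX2 l)
  set W : Ω → ℝ := fun ω => αstar + X ω ⬝ᵥ βstar with hW
  have hmXj : ∀ j, pMean (fun ω => X ω j) = μX j := by simp [hμX]
  have hmY : pMean Y = μY := hμY.symm
  -- mean of W
  have hmW : pMean W = μY := by
    have h1 : Integrable (fun ω => X ω ⬝ᵥ βstar) := by
      simp only [dotProduct]
      exact integrable_finset_sum _ (fun j _ => (hXi j).mul_const _)
    have : pMean W = αstar + μX ⬝ᵥ βstar := by
      simp only [pMean, hW]
      rw [integral_add (integrable_const _) h1]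
      simp only [integral_const, measure_univ, probReal_univ, ENNReal.toReal_one, smul_eq_mul, one_mul]
      congr 1
      simp only [dotProduct]
      rw [integral_finset_sum _ (fun j _ => (hXi j).mul_const _)]
      refine Finset.sum_congr rfl fun j _ => ?_
      rw [integral_mul_const, ← hmXj j]
      rfl
    rw [this, hαstar]; ring
  -- centered form of W
  have hWc : ∀ ω, W ω - pMean W = ∑ j, (X ω j - μX j) * βstar j := by
    intro ω
    rw [hmW]
    simp only [hW]
    rw [hαstar]
    simp only [dotProduct, sub_mul, Finset.sum_sub_distrib]
    ring
  -- covariance of Y and W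
  have hcov : pCov Y W = SigXY ⬝ᵥ βstar := by
    calc pCov Y W = ∫ ω, ∑ j, ((Y ω - μY) * (X ω j - μX j)) * βstar j := by
          simp only [pCov]
          congr 1; funext ω
          rw [hWc ω, hmY, Finset.mul_sum]
          exact Finset.sum_congr rfl fun j _ => by ring
      _ = ∑ j, (∫ ω, (Y ω - μY) * (X ω j - μX j)) * βstar j := by
          rw [integral_finset_sum _ (fun j _ => (hIYX j).mul_const _)]
          exact Finset.sum_congr rfl fun j _ => integral_mul_const _ _
      _ = SigXY ⬝ᵥ βstar := by
          simp only [hSigXY, dotProduct, pCov, hmXj, hmY]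
          refine Finset.sum_congr rfl fun j _ => ?_
          congr 1
          congr 1
          funext ω
          ring
  -- variance of W
  have hvarW : pVar W = βstar ⬝ᵥ (SigXX *ᵥ βstar) := by
    calc pVar W = ∫ ω, ∑ j, ∑ l, ((X ω j - μX j) * (X ω l - μX l)) * (βstar j * βstar l) := by
          simp only [pVar, pCov]
          congr 1; funext ω
          rw [hWc ω, Finset.sum_mul_sum]
          exact Finset.sum_congr rfl fun j _ => Finset.sum_congr rfl fun l _ => by ring
      _ = ∑ j, ∑ l, (∫ ω, (X ω j - μX j) * (X ω l - μX l)) * (βstar j * βstar l) := by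
          rw [integral_finset_sum _ (fun j _ =>
            integrable_finset_sum _ (fun l _ => (hIXX j l).mul_const _))]
          refine Finset.sum_congr rfl fun j _ => ?_
          rw [integral_finset_sum _ (fun l _ => (hIXX j l).mul_const _)]
          exact Finset.sum_congr rfl fun l _ => integral_mul_const _ _
      _ = βstar ⬝ᵥ (SigXX *ᵥ βstar) := by
          simp only [dotProduct, mulVec, hSigXX, pCov, hmXj, of_apply, Finset.mul_sum]
          exact Finset.sum_congr rfl fun j _ => Finset.sum_congr rfl fun l _ => by ring
  -- positivity of the quadratic form
  set q := SigXY ⬝ᵥ (SigXX⁻¹ *ᵥ SigXY) with hqdef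
  have hq : 0 < q := by
    have hinv : (SigXX⁻¹).PosDef := Matrix.posDef_inv_iff.mpr hPD
    simpa using hinv.re_dotProduct_pos hne
  have hs : 0 < Real.sqrt (pVar Y) := Real.sqrt_pos.mpr hvar
  have hsq : 0 < Real.sqrt q := Real.sqrt_pos.mpr hq
  have hSb : SigXX *ᵥ βstar = (Real.sqrt (pVar Y) / Real.sqrt q) • SigXY := by
    rw [hβstar, Matrix.mulVec_smul, Matrix.mulVec_mulVec,
      Matrix.mul_nonsing_inv _ (isUnit_iff_ne_zero.mpr hPD.det_pos.ne'), Matrix.one_mulVec]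
  have hcovval : SigXY ⬝ᵥ βstar = (Real.sqrt (pVar Y) / Real.sqrt q) * q := by
    rw [hβstar, dotProduct_smul, smul_eq_mul]
  have hvarval : βstar ⬝ᵥ (SigXX *ᵥ βstar) = pVar Y := by
    rw [hSb, dotProduct_smul, smul_eq_mul, hβstar, smul_dotProduct, smul_eq_mul,
      dotProduct_comm, ← hqdef]
    field_simp
    linear_combination q * Real.sq_sqrt hvar.le - pVar Y * Real.sq_sqrt hq.le
  -- final computation
  simp only [CCC, hcov, hvarW, hvarval, hmW, hmY, hcovval, hγ, sub_self]
  rw [show (0:ℝ)^2 = 0 by norm_num, add_zero]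
  field_simp
  linear_combination 2 * q * Real.mul_self_sqrt hvar.le - 2 * pVar Y * Real.mul_self_sqrt hq.le
end

section
/- Let X be a p-dimensional random row vector and Y a square-integrable real random variable with positive variance, with Σ_XX positive definite and Σ_XY ≠ 0, γ = √(Σ_YX Σ_XX⁻¹ Σ_XY)/σ_Y, β* = (σ_Y/√(Σ_YX Σ_XX⁻¹ Σ_XY))·Σ_XX⁻¹Σ_XY and α* = μ_Y − μ_X·β*. If α ∈ ℝ and β ∈ ℝ^p satisfy CCC(Y, α + X·β) = γ (i.e., the pair (α,β) achieves the maximal concordance correlation among linear predictors), then α = α* and β = β*; that is, the maximum agreement linear predictor is unique. -/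
open MeasureTheory ProbabilityTheory Matrix

section Aux

variable {Ω : Type*} [MeasureSpace Ω]

/-- Product of two L² functions is integrable (polarization). -/
lemma l2_integrable_mul {f g : Ω → ℝ} (hf : MemLp f 2 ℙ) (hg : MemLp g 2 ℙ) :
    Integrable (fun ω => f ω * g ω) := by
  have h1 : Integrable (fun ω => (f ω + g ω) ^ 2) := (hf.add hg).integrable_sq
  have h2 : Integrable (fun ω => f ω ^ 2) := hf.integrable_sq
  have h3 : Integrable (fun ω => g ω ^ 2) := hg.integrable_sq
  have : (fun ω => f ω * g ω)
      = fun ω => ((f ω + g ω) ^ 2 - f ω ^ 2 - g ω ^ 2) / 2 := by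
    funext ω; ring
  rw [this]
  exact ((h1.sub h2).sub h3).div_const 2

lemma pCov_comm (U V : Ω → ℝ) : pCov U V = pCov V U := by
  unfold pCov; congr 1; funext ω; ring

lemma pVar_nonneg (U : Ω → ℝ) : 0 ≤ pVar U := by
  unfold pVar pCov
  exact integral_nonneg fun ω => mul_self_nonneg _

end Aux


/-- Pure real-number arithmetic core of the uniqueness argument. -/
lemma malp_arith {t σ rc s d σ2 q c : ℝ}
    (hσ : 0 < σ) (hrc : 0 < rc) (hs0 : 0 ≤ s)
    (hσsq : σ ^ 2 = σ2) (hssq : s ^ 2 = q) (hrcsq : rc ^ 2 = c)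
    (hkey : 2 * t * σ = rc * (σ2 + q + d ^ 2))
    (hCS : t ^ 2 ≤ q * c) :
    d = 0 ∧ q = σ2 ∧ t = σ * rc := by
  have hq0 : 0 ≤ q := by nlinarith [sq_nonneg s]
  have hD : 0 < σ2 + q + d ^ 2 := by nlinarith [sq_nonneg d, sq_nonneg σ]
  have ht0 : 0 < t := by nlinarith [mul_pos hrc hD]
  have ht_le : t ≤ s * rc := by
    nlinarith [hCS, mul_nonneg hs0 hrc.le, sq_nonneg (t + s * rc), sq_nonneg (t - s * rc)]
  have hkey' : 2 * t * σ = rc * (σ ^ 2 + s ^ 2 + d ^ 2) := by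
    rw [hσsq, hssq]; exact hkey
  have hA : t * σ ≤ s * rc * σ := mul_le_mul_of_nonneg_right ht_le hσ.le
  have hB : 0 ≤ rc * (σ - s) ^ 2 := mul_nonneg hrc.le (sq_nonneg _)
  have hd2 : d ^ 2 ≤ 0 := by nlinarith [hA, hB, hrc]
  have hd0 : d = 0 := by
    have : d ^ 2 = 0 := le_antisymm hd2 (sq_nonneg d)
    exact pow_eq_zero_iff two_ne_zero |>.mp this
  have hss : σ = s := by
    have h1 : (σ - s) ^ 2 ≤ 0 := by nlinarith [hA, hrc, hd0]
    have h2 : (σ - s) ^ 2 = 0 := le_antisymm h1 (sq_nonneg _)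
    have := pow_eq_zero_iff two_ne_zero |>.mp h2
    linarith
  have hq_eq : q = σ2 := by rw [← hssq, ← hss, hσsq]
  refine ⟨hd0, hq_eq, ?_⟩
  have h3 : (2 * t) * σ = (2 * (σ * rc)) * σ := by
    rw [show (2 * t) * σ = 2 * t * σ from by ring, hkey, hd0, hq_eq, ← hσsq]; ring
  have := mul_right_cancel₀ hσ.ne' h3
  linarith

/-- Uniqueness of the maximum agreement linear predictor: any linear
predictor attaining the maximal concordance correlation `γ` must be the MALP. -/
theorem malp_unique {Ω : Type*} [MeasureSpace Ω]
    [IsProbabilityMeasure (ℙ : Measure Ω)] {p : ℕ} (hp : 0 < p)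
    (X : Ω → Fin p → ℝ) (Y : Ω → ℝ)
    (hX : ∀ j, MemLp (fun ω => X ω j) 2 ℙ) (hY : MemLp Y 2 ℙ)
    (hvar : 0 < pVar Y)
    (μX : Fin p → ℝ) (hμX : μX = fun j => pMean (fun ω => X ω j))
    (μY : ℝ) (hμY : μY = pMean Y)
    (SigXX : Matrix (Fin p) (Fin p) ℝ)
    (hSigXX : SigXX = Matrix.of fun j l => pCov (fun ω => X ω j) (fun ω => X ω l))
    (hPD : SigXX.PosDef)
    (SigXY : Fin p → ℝ) (hSigXY : SigXY = fun j => pCov (fun ω => X ω j) Y)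
    (hne : SigXY ≠ 0)
    (γ : ℝ) (hγ : γ = Real.sqrt (SigXY ⬝ᵥ (SigXX⁻¹ *ᵥ SigXY)) / Real.sqrt (pVar Y))
    (βstar : Fin p → ℝ)
    (hβstar : βstar = (Real.sqrt (pVar Y) / Real.sqrt (SigXY ⬝ᵥ (SigXX⁻¹ *ᵥ SigXY))) •
      (SigXX⁻¹ *ᵥ SigXY))
    (αstar : ℝ) (hαstar : αstar = μY - μX ⬝ᵥ βstar)
    (α : ℝ) (β : Fin p → ℝ)
    (heq : CCC Y (fun ω => α + X ω ⬝ᵥ β) = γ) :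
    α = αstar ∧ β = βstar := by
  -- notation
  set W : Ω → ℝ := fun ω => α + X ω ⬝ᵥ β with hW
  have hXi : ∀ j, Integrable (fun ω => X ω j) := fun j => (hX j).integrable one_le_two
  have hμXj : ∀ j, pMean (fun ω => X ω j) = μX j := by intro j; rw [hμX]
  -- centered variables are L²
  have hcX : ∀ j, MemLp (fun ω => X ω j - μX j) 2 ℙ :=
    fun j => (hX j).sub (memLp_const _)
  have hcY : MemLp (fun ω => Y ω - pMean Y) 2 ℙ := hY.sub (memLp_const _)
  -- mean of W
  have hμW : pMean W = α + μX ⬝ᵥ β := by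
    have hsum : Integrable (fun ω => ∑ j, X ω j * β j) :=
      integrable_finset_sum _ (fun j _ => (hXi j).mul_const (β j))
    have h0 : pMean W = ∫ ω, (α + ∑ j, X ω j * β j) := rfl
    rw [h0, integral_add (integrable_const α) hsum, integral_const,
      integral_finset_sum _ (fun j _ => (hXi j).mul_const (β j))]
    simp only [integral_mul_const]
    have : ∀ j, (∫ ω, X ω j) = μX j := fun j => hμXj j
    simp [measure_univ, dotProduct, this]
  -- centered W
  have hWc : ∀ ω, W ω - pMean W = ∑ j, (X ω j - μX j) * β j := by
    intro ω
    rw [hμW]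
    show α + X ω ⬝ᵥ β - (α + μX ⬝ᵥ β) = _
    simp only [dotProduct, sub_mul, Finset.sum_sub_distrib]
    ring
  -- covariance of Y and W
  have hcovW : pCov Y W = β ⬝ᵥ SigXY := by
    unfold pCov
    have h1 : ∀ ω, (Y ω - pMean Y) * (W ω - pMean W)
        = ∑ j, β j * ((X ω j - μX j) * (Y ω - pMean Y)) := by
      intro ω
      rw [hWc ω, Finset.mul_sum]
      exact Finset.sum_congr rfl fun j _ => by ring
    rw [show (∫ ω, (Y ω - pMean Y) * (W ω - pMean W))
        = ∫ ω, ∑ j, β j * ((X ω j - μX j) * (Y ω - pMean Y)) from by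
      congr 1; funext ω; exact h1 ω]
    rw [integral_finset_sum _ (fun j _ =>
      ((l2_integrable_mul (hcX j) hcY)).const_mul (β j))]
    simp only [integral_const_mul]
    rw [hSigXY]
    simp only [dotProduct]
    refine Finset.sum_congr rfl fun j _ => ?_
    unfold pCov
    rw [hμXj j]
  -- variance of W
  have hvarW : pVar W = β ⬝ᵥ (SigXX *ᵥ β) := by
    unfold pVar pCov
    have h1 : ∀ ω, (W ω - pMean W) * (W ω - pMean W)
        = ∑ j, ∑ l, (β j * β l) * ((X ω j - μX j) * (X ω l - μX l)) := by
      intro ω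
      rw [hWc ω, Finset.sum_mul_sum]
      exact Finset.sum_congr rfl fun j _ => Finset.sum_congr rfl fun l _ => by ring
    rw [show (∫ ω, (W ω - pMean W) * (W ω - pMean W))
        = ∫ ω, ∑ j, ∑ l, (β j * β l) * ((X ω j - μX j) * (X ω l - μX l)) from by
      congr 1; funext ω; exact h1 ω]
    rw [integral_finset_sum _ (fun j _ => integrable_finset_sum _ (fun l _ =>
      (l2_integrable_mul (hcX j) (hcX l)).const_mul _))]
    have : ∀ j, (∫ ω, ∑ l, (β j * β l) * ((X ω j - μX j) * (X ω l - μX l)))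
        = ∑ l, (β j * β l) * (∫ ω, (X ω j - μX j) * (X ω l - μX l)) := by
      intro j
      rw [integral_finset_sum _ (fun l _ =>
        (l2_integrable_mul (hcX j) (hcX l)).const_mul _)]
      simp only [integral_const_mul]
    simp only [this]
    rw [hSigXX]
    simp only [dotProduct, Matrix.mulVec, dotProduct, Matrix.of_apply, Finset.mul_sum]
    refine Finset.sum_congr rfl fun j _ => Finset.sum_congr rfl fun l _ => ?_
    unfold pCov
    rw [hμXj j, hμXj l]
    ring
  -- matrix algebra setup
  set c : ℝ := SigXY ⬝ᵥ (SigXX⁻¹ *ᵥ SigXY) with hcdef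
  set v : Fin p → ℝ := SigXX⁻¹ *ᵥ SigXY with hvdef
  have hdet : IsUnit SigXX.det := isUnit_iff_ne_zero.mpr hPD.det_pos.ne'
  have hSv : SigXX *ᵥ v = SigXY := by
    rw [hvdef, Matrix.mulVec_mulVec, Matrix.mul_nonsing_inv _ hdet, Matrix.one_mulVec]
  have hSsymm : ∀ j l, SigXX j l = SigXX l j := by
    intro j l
    rw [hSigXX]
    simp only [Matrix.of_apply]
    exact pCov_comm _ _
  have hsymm : ∀ x y : Fin p → ℝ, x ⬝ᵥ (SigXX *ᵥ y) = y ⬝ᵥ (SigXX *ᵥ x) := by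
    intro x y
    simp only [dotProduct, Matrix.mulVec, dotProduct, Finset.mul_sum]
    rw [Finset.sum_comm]
    refine Finset.sum_congr rfl fun j _ => Finset.sum_congr rfl fun i _ => ?_
    rw [hSsymm i j]; ring
  have hPDlt : ∀ w : Fin p → ℝ, w ≠ 0 → 0 < w ⬝ᵥ (SigXX *ᵥ w) := by
    intro w hw
    have := hPD.dotProduct_mulVec_pos hw
    simpa using this
  have hc : 0 < c := by
    have := hPD.inv.dotProduct_mulVec_pos hne
    simpa [hcdef] using this
  have hvc : v ⬝ᵥ (SigXX *ᵥ v) = c := by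
    rw [hSv, hcdef]
    exact dotProduct_comm _ _
  -- abbreviations for reals
  set t : ℝ := β ⬝ᵥ SigXY with htdef
  set q : ℝ := β ⬝ᵥ (SigXX *ᵥ β) with hqdef
  have hBv : β ⬝ᵥ (SigXX *ᵥ v) = t := by rw [hSv]
  -- bilinear expansion
  have hBw : ∀ a b : ℝ, (a • β - b • v) ⬝ᵥ (SigXX *ᵥ (a • β - b • v))
      = a ^ 2 * q - 2 * a * b * t + b ^ 2 * c := by
    intro a b
    rw [Matrix.mulVec_sub, Matrix.mulVec_smul, Matrix.mulVec_smul,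
      sub_dotProduct, smul_dotProduct, smul_dotProduct,
      dotProduct_sub, dotProduct_sub,
      dotProduct_smul, dotProduct_smul,
      dotProduct_smul, dotProduct_smul,
      hsymm v β, hBv, hvc]
    simp only [smul_eq_mul]
    ring
  have hq0 : 0 ≤ q := by rw [← hvarW]; exact pVar_nonneg W
  -- Cauchy–Schwarz: t² ≤ q c
  have hCS : t ^ 2 ≤ q * c := by
    have h0 : 0 ≤ (c • β - t • v) ⬝ᵥ (SigXX *ᵥ (c • β - t • v)) := by
      rcases eq_or_ne (c • β - t • v) 0 with h | h
      · rw [h]; simp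
      · exact (hPDlt _ h).le
    rw [hBw c t] at h0
    nlinarith [hc, h0]
  -- reals
  set σ2 : ℝ := pVar Y with hσ2def
  set σ : ℝ := Real.sqrt σ2 with hσdef
  set rc : ℝ := Real.sqrt c with hrcdef
  set s : ℝ := Real.sqrt q with hsdef
  have hσ : 0 < σ := Real.sqrt_pos.mpr hvar
  have hrc : 0 < rc := Real.sqrt_pos.mpr hc
  have hs0 : 0 ≤ s := Real.sqrt_nonneg q
  have hσsq : σ ^ 2 = σ2 := Real.sq_sqrt hvar.le
  have hrcsq : rc ^ 2 = c := Real.sq_sqrt hc.le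
  have hssq : s ^ 2 = q := Real.sq_sqrt hq0
  set d : ℝ := pMean Y - pMean W with hddef
  -- the key equation from heq
  have hD : 0 < σ2 + q + d ^ 2 := by positivity
  have hkey : 2 * t * σ = rc * (σ2 + q + d ^ 2) := by
    have heq' : 2 * t / (σ2 + q + d ^ 2) = rc / σ := by
      have := heq
      unfold CCC at this
      rw [hcovW, hvarW, hγ] at this
      exact this
    rw [div_eq_div_iff hD.ne' hσ.ne'] at heq'
    linarith [heq']
  clear_value v c t q σ2 σ rc s d
  obtain ⟨hd0, hq_eq, htv⟩ := malp_arith hσ hrc hs0 hσsq hssq hrcsq hkey hCS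
  have ht2 : t ^ 2 = q * c := by
    rw [htv, hq_eq, ← hσsq, ← hrcsq]; ring
  -- equality case of Cauchy–Schwarz: c • β = t • v
  have hw0 : c • β - t • v = 0 := by
    by_contra hw
    have hpos := hPDlt _ hw
    rw [hBw c t] at hpos
    have hz : c ^ 2 * q - 2 * c * t * t + t ^ 2 * c = 0 := by
      linear_combination (-c) * ht2
    linarith [hpos, hz]
  -- conclude β = βstar
  have hβ : β = βstar := by
    funext j
    have hj : c * β j - t * v j = 0 := by
      have := congrFun hw0 j
      simpa [smul_eq_mul] using this
    have hβj : β j = (t / c) * v j := by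
      field_simp
      linarith [hj]
    rw [hβstar]
    simp only [Pi.smul_apply, smul_eq_mul, ← hvdef, ← hcdef, ← hσ2def, ← hrcdef, ← hσdef]
    rw [hβj, htv]
    rw [show σ * rc / c = σ / rc from by rw [← hrcsq]; field_simp]
  refine ⟨?_, hβ⟩
  -- conclude α = αstar
  have : pMean Y - (α + μX ⬝ᵥ β) = 0 := by rw [← hμW, ← hddef]; exact hd0
  rw [hαstar, ← hβ, hμY]
  linarith [this]
end

section
/- Let Σ_XX be a p×p real positive definite matrix, Σ_XY ∈ ℝ^p a nonzero column vector with Σ_YX = Σ_XYᵀ, σ_Y > 0, and γ = √(Σ_YX Σ_XX⁻¹ Σ_XY)/σ_Y; assume γ ≤ 1. Define, for x₀ ∈ ℝ^p (row vector), σ_MA²(x₀) = σ_Y²(1−γ²)·[ 2/(1+γ) + (1/γ²)(x₀−μ_X)Σ_XX⁻¹(x₀−μ_X)ᵀ − ((1−γ²)/(σ_Y²γ⁴))(Σ_YX Σ_XX⁻¹(x₀−μ_X)ᵀ)² ] and σ_LS²(x₀) = σ_Y²(1−γ²)·[ 1 + (x₀−μ_X)Σ_XX⁻¹(x₀−μ_X)ᵀ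 ]. Then for every x₀ ∈ ℝ^p and μ_X ∈ ℝ^p, σ_MA²(x₀) ≥ σ_LS²(x₀). -/
open Matrix

lemma symm_dot {p : ℕ} {A : Matrix (Fin p) (Fin p) ℝ} (hA : A.IsHermitian)
    (u v : Fin p → ℝ) : u ⬝ᵥ (A *ᵥ v) = v ⬝ᵥ (A *ᵥ u) := by
  have h : Aᵀ = A := by simpa [Matrix.IsHermitian, conjTranspose_eq_transpose_of_trivial] using hA
  rw [dotProduct_mulVec, ← mulVec_transpose, h, dotProduct_comm]

lemma cs_posdef {p : ℕ} {A : Matrix (Fin p) (Fin p) ℝ} (hA : A.PosDef)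
    (u v : Fin p → ℝ) : (u ⬝ᵥ (A *ᵥ v)) ^ 2 ≤ (u ⬝ᵥ (A *ᵥ u)) * (v ⬝ᵥ (A *ᵥ v)) := by
  by_cases hv : v = 0
  · simp [hv]
  set q := u ⬝ᵥ (A *ᵥ u)
  set c := v ⬝ᵥ (A *ᵥ v)
  set s := u ⬝ᵥ (A *ᵥ v)
  have hc : 0 < c := by simpa using hA.dotProduct_mulVec_pos hv
  have hvu : v ⬝ᵥ (A *ᵥ u) = s := (symm_dot hA.1 u v).symm
  have key : 0 ≤ c ^ 2 * q - c * s ^ 2 := by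
    have h0 : 0 ≤ (c • u - s • v) ⬝ᵥ (A *ᵥ (c • u - s • v)) :=
      by simpa using hA.posSemidef.dotProduct_mulVec_nonneg (c • u - s • v)
    have : (c • u - s • v) ⬝ᵥ (A *ᵥ (c • u - s • v)) = c ^ 2 * q - c * s ^ 2 := by
      simp [mulVec_sub, mulVec_smul, sub_dotProduct, dotProduct_sub,
        smul_dotProduct, dotProduct_smul, hvu, smul_eq_mul, q, c, s]
      ring
    linarith [this ▸ h0]
  nlinarith [hc, key]

/-- With `γ = √(Σ_YX Σ_XX⁻¹ Σ_XY)/σ_Y ≤ 1`, the asymptotic variance of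
the estimated MALP dominates that of the estimated LSLP: `σ_MA²(x₀) ≥ σ_LS²(x₀)` for all
`x₀` and `μ_X`. -/
theorem malp_variance_ge_lslp_variance {p : ℕ}
    (SigXX : Matrix (Fin p) (Fin p) ℝ) (hPD : SigXX.PosDef)
    (SigXY : Fin p → ℝ) (hne : SigXY ≠ 0)
    (σY : ℝ) (hσY : 0 < σY)
    (γ : ℝ) (hγ : γ = Real.sqrt (SigXY ⬝ᵥ (SigXX⁻¹ *ᵥ SigXY)) / σY)
    (hγ1 : γ ≤ 1) :
    ∀ (x₀ μX : Fin p → ℝ),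
      σY ^ 2 * (1 - γ ^ 2) * (2 / (1 + γ)
        + (1 / γ ^ 2) * ((x₀ - μX) ⬝ᵥ (SigXX⁻¹ *ᵥ (x₀ - μX)))
        - ((1 - γ ^ 2) / (σY ^ 2 * γ ^ 4)) * (SigXY ⬝ᵥ (SigXX⁻¹ *ᵥ (x₀ - μX))) ^ 2)
      ≥ σY ^ 2 * (1 - γ ^ 2) * (1 + (x₀ - μX) ⬝ᵥ (SigXX⁻¹ *ᵥ (x₀ - μX))) := by
  intro x₀ μX
  have hApd : (SigXX⁻¹).PosDef := hPD.inv
  set v := x₀ - μX with hv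
  set q := v ⬝ᵥ (SigXX⁻¹ *ᵥ v) with hq
  set c := SigXY ⬝ᵥ (SigXX⁻¹ *ᵥ SigXY) with hc
  set s := SigXY ⬝ᵥ (SigXX⁻¹ *ᵥ v) with hs
  have hcpos : 0 < c := by simpa using hApd.dotProduct_mulVec_pos hne
  have hqnn : 0 ≤ q := by simpa using hApd.posSemidef.dotProduct_mulVec_nonneg v
  have hcs : s ^ 2 ≤ c * q := cs_posdef hApd SigXY v
  have hγpos : 0 < γ := by
    rw [hγ]
    exact div_pos (Real.sqrt_pos.mpr hcpos) hσY
  have hγ2 : σY ^ 2 * γ ^ 2 = c := by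
    rw [hγ]
    field_simp
    exact Real.sq_sqrt hcpos.le
  -- inner inequality
  have h1 : (1:ℝ) ≤ 2 / (1 + γ) := by
    rw [le_div_iff₀ (by linarith)]
    linarith
  have h2 : ((1 - γ ^ 2) / (σY ^ 2 * γ ^ 4)) * s ^ 2 ≤ (1 / γ ^ 2) * q - q := by
    have hg2 : (0:ℝ) < γ ^ 2 := by positivity
    have hd : (0:ℝ) < σY ^ 2 * γ ^ 4 := by positivity
    rw [div_mul_eq_mul_div, div_le_iff₀ hd]
    have h1g : 0 ≤ 1 - γ ^ 2 := by nlinarith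
    have hb : (1 - γ ^ 2) * s ^ 2 ≤ (1 - γ ^ 2) * (c * q) :=
      mul_le_mul_of_nonneg_left hcs h1g
    have : ((1 / γ ^ 2) * q - q) * (σY ^ 2 * γ ^ 4) = (1 - γ ^ 2) * (σY ^ 2 * γ ^ 2 * q) := by
      field_simp
    rw [this, hγ2]
    nlinarith
  have hinner : 1 + q ≤ 2 / (1 + γ) + (1 / γ ^ 2) * q - ((1 - γ ^ 2) / (σY ^ 2 * γ ^ 4)) * s ^ 2 := by
    linarith
  have hg2le : γ ^ 2 ≤ 1 := by nlinarith [mul_nonneg (sub_nonneg.mpr hγ1) hγpos.le]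
  have hK : 0 ≤ σY ^ 2 * (1 - γ ^ 2) := mul_nonneg (sq_nonneg σY) (by linarith)
  exact mul_le_mul_of_nonneg_left hinner hK
end

section
/- Let S be a p×p real symmetric positive definite matrix, c ∈ ℝ^p a nonzero column vector, and σ > 0. Then for every β ∈ ℝ^p, 2(cᵀβ)/(σ² + βᵀSβ) ≤ √(cᵀS⁻¹c)/σ, and equality holds if and only if β = σ·S⁻¹c/√(cᵀS⁻¹c). -/
open Matrix

/-- Deterministic optimization core of the MALP: for a positive
definite `S`, nonzero `c` and `σ > 0`, the map `β ↦ 2(cᵀβ)/(σ² + βᵀSβ)` is bounded by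
`√(cᵀS⁻¹c)/σ`, with equality exactly at `β = σ·S⁻¹c/√(cᵀS⁻¹c)`. -/
theorem ccc_slope_optimization {p : ℕ}
    (S : Matrix (Fin p) (Fin p) ℝ) (hS : S.PosDef)
    (c : Fin p → ℝ) (hc : c ≠ 0) (σ : ℝ) (hσ : 0 < σ) (β : Fin p → ℝ) :
    2 * (c ⬝ᵥ β) / (σ ^ 2 + β ⬝ᵥ (S *ᵥ β)) ≤ Real.sqrt (c ⬝ᵥ (S⁻¹ *ᵥ c)) / σ ∧
    (2 * (c ⬝ᵥ β) / (σ ^ 2 + β ⬝ᵥ (S *ᵥ β)) = Real.sqrt (c ⬝ᵥ (S⁻¹ *ᵥ c)) / σ ↔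
      β = (σ / Real.sqrt (c ⬝ᵥ (S⁻¹ *ᵥ c))) • (S⁻¹ *ᵥ c)) := by
  set m : Fin p → ℝ := S⁻¹ *ᵥ c with hmdef
  have hdet : IsUnit S.det := isUnit_iff_ne_zero.mpr hS.det_pos.ne'
  have hSm : S *ᵥ m = c := by
    rw [hmdef, mulVec_mulVec, mul_nonsing_inv _ hdet, one_mulVec]
  -- symmetry of the quadratic form
  have hSymm : Sᵀ = S := hS.1
  have hsym : ∀ x y : Fin p → ℝ, x ⬝ᵥ (S *ᵥ y) = y ⬝ᵥ (S *ᵥ x) := by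
    intro x y
    rw [dotProduct_mulVec, ← Matrix.mulVec_transpose, hSymm, dotProduct_comm]
  -- positivity of γ² = cᵀ S⁻¹ c
  have hg2 : 0 < c ⬝ᵥ m := by
    have := hS.inv.dotProduct_mulVec_pos hc
    simpa [hmdef] using this
  set γ : ℝ := Real.sqrt (c ⬝ᵥ m) with hγdef
  have hγ : 0 < γ := Real.sqrt_pos.mpr hg2
  have hγ2 : γ * γ = c ⬝ᵥ m := Real.mul_self_sqrt hg2.le
  set t : ℝ := σ / γ with htdef
  have ht : 0 < t := div_pos hσ hγ
  -- quadratic form at β - t • m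
  have hmSm : m ⬝ᵥ (S *ᵥ m) = c ⬝ᵥ m := by rw [hsym, hSm, dotProduct_comm]
  have hmSβ : m ⬝ᵥ (S *ᵥ β) = c ⬝ᵥ β := by rw [hsym, hSm, dotProduct_comm]
  have hβSm : β ⬝ᵥ (S *ᵥ m) = c ⬝ᵥ β := by rw [hSm, dotProduct_comm]
  have hQ : (β - t • m) ⬝ᵥ (S *ᵥ (β - t • m))
      = β ⬝ᵥ (S *ᵥ β) - 2 * t * (c ⬝ᵥ β) + t ^ 2 * (c ⬝ᵥ m) := by
    rw [mulVec_sub, mulVec_smul, dotProduct_sub, sub_dotProduct, sub_dotProduct,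
      smul_dotProduct, smul_dotProduct, dotProduct_smul, dotProduct_smul,
      hmSm, hmSβ, hβSm]
    simp only [smul_eq_mul]
    ring
  have hQnn : 0 ≤ (β - t • m) ⬝ᵥ (S *ᵥ (β - t • m)) := by
    have := hS.posSemidef.dotProduct_mulVec_nonneg (β - t • m)
    simpa only [star_trivial] using this
  have hden : 0 < σ ^ 2 + β ⬝ᵥ (S *ᵥ β) := by
    have := hS.posSemidef.dotProduct_mulVec_nonneg β
    simp only [star_trivial] at this
    positivity
  -- key identity: γ·Q = γ(σ² + βᵀSβ) - 2σ(cᵀβ)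
  have hkey : γ * ((β - t • m) ⬝ᵥ (S *ᵥ (β - t • m)))
      = γ * (σ ^ 2 + β ⬝ᵥ (S *ᵥ β)) - 2 * σ * (c ⬝ᵥ β) := by
    have e1 : γ * t = σ := by rw [htdef]; field_simp
    have e3 : γ * (t ^ 2 * (c ⬝ᵥ m)) = σ ^ 2 * γ := by
      rw [← hγ2]; linear_combination (γ * t + σ) * γ * e1
    rw [hQ]
    linear_combination (-2 * (c ⬝ᵥ β)) * e1 + e3
  have hineq : 2 * (c ⬝ᵥ β) * σ ≤ γ * (σ ^ 2 + β ⬝ᵥ (S *ᵥ β)) := by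
    nlinarith [mul_nonneg hγ.le hQnn]
  constructor
  · rw [div_le_div_iff₀ hden hσ]
    linarith
  · rw [div_eq_div_iff hden.ne' hσ.ne']
    constructor
    · intro h
      have hQ0 : γ * ((β - t • m) ⬝ᵥ (S *ᵥ (β - t • m))) = 0 := by linarith
      have hQ0' : (β - t • m) ⬝ᵥ (S *ᵥ (β - t • m)) = 0 := by
        rcases mul_eq_zero.mp hQ0 with h' | h'
        · exact absurd h' hγ.ne'
        · exact h'
      have : β - t • m = 0 := by
        by_contra hne
        exact (hS.dotProduct_mulVec_pos hne).ne' (by simpa using hQ0')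
      have := sub_eq_zero.mp this
      simpa [htdef, hγdef, hmdef] using this
    · intro h
      have hβeq : β = t • m := by simpa [htdef, hγdef, hmdef] using h
      have hQ0 : (β - t • m) ⬝ᵥ (S *ᵥ (β - t • m)) = 0 := by
        rw [hβeq]; simp
      have := hkey
      rw [hQ0, mul_zero] at this
      linarith
end

section
/- Let X be a p-dimensional random row vector and Y a square-integrable real random variable with positive variance, with Σ_XX positive definite and Σ_XY ≠ 0, γ = √(Σ_YX Σ_XX⁻¹ Σ_XY)/σ_Y, and let Ỹ*(x) = μ_Y + (x−μ_X)·(1/γ)Σ_XX⁻¹Σ_XY be the maximum agreement linear predictor. Then E[Ỹ*(X)] = E[Y] and Var[Ỹ*(X)] = Var[Y]; that is, the MALP has the same mean and the same variance as the predictand. -/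
open MeasureTheory ProbabilityTheory Matrix

theorem aux_int_mul {α} [MeasurableSpace α] {f g : α → ℝ} {μ : Measure α}
    (hf : MemLp f 2 μ) (hg : MemLp g 2 μ) :
    Integrable (fun x => f x * g x) μ := by
  have h : MemLp (g • f) 1 μ := hf.smul hg
  exact memLp_one_iff_integrable.mp (by simpa [smul_eq_mul, mul_comm, Pi.mul_def] using h)

/-- The maximum agreement linear predictor
`Ỹ*(x) = μ_Y + (x−μ_X)·(1/γ)Σ_XX⁻¹Σ_XY` has the same mean and variance as `Y`. -/
theorem malp_mean_variance_match {Ω : Type*} [MeasureSpace Ω]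
    [IsProbabilityMeasure (ℙ : Measure Ω)] {p : ℕ} (hp : 0 < p)
    (X : Ω → Fin p → ℝ) (Y : Ω → ℝ)
    (hX : ∀ j, MemLp (fun ω => X ω j) 2 ℙ) (hY : MemLp Y 2 ℙ)
    (hvar : 0 < pVar Y)
    (μX : Fin p → ℝ) (hμX : μX = fun j => pMean (fun ω => X ω j))
    (μY : ℝ) (hμY : μY = pMean Y)
    (SigXX : Matrix (Fin p) (Fin p) ℝ)
    (hSigXX : SigXX = Matrix.of fun j l => pCov (fun ω => X ω j) (fun ω => X ω l))
    (hPD : SigXX.PosDef)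
    (SigXY : Fin p → ℝ) (hSigXY : SigXY = fun j => pCov (fun ω => X ω j) Y)
    (hne : SigXY ≠ 0)
    (γ : ℝ) (hγ : γ = Real.sqrt (SigXY ⬝ᵥ (SigXX⁻¹ *ᵥ SigXY)) / Real.sqrt (pVar Y)) :
    pMean (fun ω => μY + (X ω - μX) ⬝ᵥ (γ⁻¹ • (SigXX⁻¹ *ᵥ SigXY))) = pMean Y ∧
    pVar (fun ω => μY + (X ω - μX) ⬝ᵥ (γ⁻¹ • (SigXX⁻¹ *ᵥ SigXY))) = pVar Y := by
  set c : Fin p → ℝ := γ⁻¹ • (SigXX⁻¹ *ᵥ SigXY) with hc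
  set v : Fin p → ℝ := SigXX⁻¹ *ᵥ SigXY with hv
  set q : ℝ := SigXY ⬝ᵥ v with hq
  -- basic integrability
  have hXi : ∀ j, Integrable (fun ω => X ω j) ℙ := fun j => (hX j).integrable one_le_two
  have hZ : ∀ j, MemLp (fun ω => X ω j - μX j) 2 ℙ := fun j => (hX j).sub (memLp_const _)
  have hZi : ∀ j, Integrable (fun ω => X ω j - μX j) ℙ := fun j => (hZ j).integrable one_le_two
  have hZZ : ∀ j l, Integrable (fun ω => (X ω j - μX j) * (X ω l - μX l)) ℙ :=
    fun j l => aux_int_mul (hZ j) (hZ l)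
  have hZmean : ∀ j, ∫ ω, (X ω j - μX j) = 0 := by
    intro j
    rw [integral_sub (hXi j) (integrable_const _), integral_const]
    simp [hμX, pMean]
  -- the dot product as a sum
  have hdot : ∀ ω, (X ω - μX) ⬝ᵥ c = ∑ j, (X ω j - μX j) * c j := by
    intro ω; simp [dotProduct]
  -- integrability of the sum
  have hSint : Integrable (fun ω => ∑ j, (X ω j - μX j) * c j) ℙ :=
    integrable_finset_sum _ fun j _ => (hZi j).mul_const _
  -- the mean
  have hmean : pMean (fun ω => μY + (X ω - μX) ⬝ᵥ c) = μY := by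
    unfold pMean
    have : ∀ ω, μY + (X ω - μX) ⬝ᵥ c = μY + ∑ j, (X ω j - μX j) * c j := by
      intro ω; rw [hdot]
    rw [integral_congr_ae (Filter.Eventually.of_forall this),
      integral_add (integrable_const _) hSint, integral_const,
      integral_finset_sum _ fun j _ => (hZi j).mul_const _]
    have : ∀ j ∈ Finset.univ, (∫ ω, (X ω j - μX j) * c j) = 0 := by
      intro j _
      rw [integral_mul_const, hZmean j, zero_mul]
    rw [Finset.sum_congr rfl this]
    simp
  refine ⟨by rw [hmean, hμY], ?_⟩
  -- the variance
  have hcov : ∀ j l, (∫ ω, (X ω j - μX j) * (X ω l - μX l)) = SigXX j l := by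
    intro j l
    rw [hSigXX]
    simp only [Matrix.of_apply, pCov]
    congr 1 <;> funext ω <;> rw [hμX]
  have hvarW : pVar (fun ω => μY + (X ω - μX) ⬝ᵥ c) = ∑ j, ∑ l, c j * c l * SigXX j l := by
    unfold pVar pCov
    rw [hmean]
    have heq : ∀ ω, ((μY + (X ω - μX) ⬝ᵥ c) - μY) * ((μY + (X ω - μX) ⬝ᵥ c) - μY)
        = ∑ j, ∑ l, ((X ω j - μX j) * (X ω l - μX l)) * (c j * c l) := by
      intro ω
      rw [add_sub_cancel_left, hdot, Finset.sum_mul_sum]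
      exact Finset.sum_congr rfl fun j _ => Finset.sum_congr rfl fun l _ => by ring
    rw [integral_congr_ae (Filter.Eventually.of_forall heq),
      integral_finset_sum _ fun j _ =>
        integrable_finset_sum _ fun l _ => (hZZ j l).mul_const _]
    refine Finset.sum_congr rfl fun j _ => ?_
    rw [integral_finset_sum _ fun l _ => (hZZ j l).mul_const _]
    refine Finset.sum_congr rfl fun l _ => ?_
    rw [integral_mul_const, hcov j l]
    ring
  -- positivity of q
  have hqpos : 0 < q := by
    have h := hPD.inv.dotProduct_mulVec_pos hne
    simpa [hq, hv] using h
  -- SigXX *ᵥ v = SigXY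
  have hdet : IsUnit SigXX.det := isUnit_iff_ne_zero.mpr hPD.det_pos.ne'
  have hSv : SigXX *ᵥ v = SigXY := by
    rw [hv, mulVec_mulVec, Matrix.mul_nonsing_inv _ hdet, Matrix.one_mulVec]
  -- algebraic identification
  have hr : (∑ j, ∑ l, c j * c l * SigXX j l) = γ⁻¹ * (γ⁻¹ * q) := by
    have h1 : (∑ j, ∑ l, c j * c l * SigXX j l) = c ⬝ᵥ (SigXX *ᵥ c) := by
      simp only [dotProduct, mulVec, Finset.mul_sum]
      exact Finset.sum_congr rfl fun j _ => Finset.sum_congr rfl fun l _ => by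
        ring
    rw [h1, hc, mulVec_smul, hSv, smul_dotProduct, dotProduct_smul, smul_eq_mul, smul_eq_mul,
      dotProduct_comm, ← hq]
  have hγpos : 0 < γ := by
    rw [hγ]
    exact div_pos (Real.sqrt_pos.mpr hqpos) (Real.sqrt_pos.mpr hvar)
  have hγsq : γ ^ 2 = q / pVar Y := by
    rw [hγ, div_pow, Real.sq_sqrt hqpos.le, Real.sq_sqrt hvar.le]
  rw [hvarW, hr]
  have hγne : γ ≠ 0 := hγpos.ne'
  have : γ⁻¹ * γ⁻¹ = pVar Y / q := by
    rw [← mul_inv, ← sq, hγsq, inv_div]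
  rw [← mul_assoc, this, div_mul_cancel₀ _ hqpos.ne']
end

section
/- For square-integrable real random variables U and V with positive variances, |CCC(U,V)| ≤ |ρ(U,V)|; moreover, if ρ(U,V) ≠ 0, then |CCC(U,V)| = |ρ(U,V)| if and only if E[U] = E[V] and Var(U) = Var(V). -/
open MeasureTheory ProbabilityTheory Matrix

/-- Pearson correlation coefficient of two real random variables. -/
noncomputable def pPCC {Ω : Type*} [MeasureSpace Ω] (U V : Ω → ℝ) : ℝ :=
  pCov U V / (Real.sqrt (pVar U) * Real.sqrt (pVar V))

/-- `|CCC(U,V)| ≤ |ρ(U,V)|`, and when `ρ(U,V) ≠ 0`, equality holds if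
and only if `E[U] = E[V]` and `Var(U) = Var(V)`. -/
theorem abs_ccc_le_abs_pcc {Ω : Type*} [MeasureSpace Ω]
    [IsProbabilityMeasure (ℙ : Measure Ω)]
    (U V : Ω → ℝ) (hU : MemLp U 2 ℙ) (hV : MemLp V 2 ℙ)
    (hvarU : 0 < pVar U) (hvarV : 0 < pVar V) :
    |CCC U V| ≤ |pPCC U V| ∧
    (pPCC U V ≠ 0 →
      (|CCC U V| = |pPCC U V| ↔ pMean U = pMean V ∧ pVar U = pVar V)) := by
  set a := pVar U with ha'
  set b := pVar V with hb'
  set c := pCov U V with hc'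
  set d := pMean U - pMean V with hd'
  have hsa : 0 < Real.sqrt a := Real.sqrt_pos.mpr hvarU
  have hsb : 0 < Real.sqrt b := Real.sqrt_pos.mpr hvarV
  have hab : 0 < Real.sqrt a * Real.sqrt b := mul_pos hsa hsb
  have hsqa : Real.sqrt a ^ 2 = a := Real.sq_sqrt hvarU.le
  have hsqb : Real.sqrt b ^ 2 = b := Real.sq_sqrt hvarV.le
  have hden : 0 < a + b + d ^ 2 := by positivity
  have key : 2 * (Real.sqrt a * Real.sqrt b) ≤ a + b + d ^ 2 := by
    nlinarith [sq_nonneg (Real.sqrt a - Real.sqrt b), sq_nonneg d]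
  have h1 : |CCC U V| = 2 * |c| / (a + b + d ^ 2) := by
    rw [CCC, abs_div, abs_of_pos hden, abs_mul]
    norm_num
    rfl
  have h2 : |pPCC U V| = |c| / (Real.sqrt a * Real.sqrt b) := by
    rw [pPCC, abs_div, abs_of_pos hab]
  constructor
  · rw [h1, h2, div_le_div_iff₀ hden hab]
    nlinarith [abs_nonneg c, key]
  · intro hne
    have hcne : c ≠ 0 := by
      intro h
      exact hne (by rw [pPCC, ← hc', h, zero_div])
    have hcpos : 0 < |c| := abs_pos.mpr hcne
    constructor
    · intro heq
      rw [h1, h2, div_eq_div_iff hden.ne' hab.ne'] at heq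
      have heq2 : 2 * (Real.sqrt a * Real.sqrt b) = a + b + d ^ 2 := by
        have h3 : |c| * (2 * (Real.sqrt a * Real.sqrt b)) = |c| * (a + b + d ^ 2) := by
          nlinarith [heq]
        exact mul_left_cancel₀ (ne_of_gt hcpos) h3
      have hd0 : d = 0 := by
        nlinarith [sq_nonneg (Real.sqrt a - Real.sqrt b), sq_nonneg d]
      have hsab : Real.sqrt a = Real.sqrt b := by
        nlinarith [sq_nonneg (Real.sqrt a - Real.sqrt b), sq_nonneg d]
      rw [hd'] at hd0
      refine ⟨sub_eq_zero.mp hd0, ?_⟩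
      rw [← hsqa, ← hsqb, hsab]
    · rintro ⟨hm, hv⟩
      have hd0 : d = 0 := by rw [hd', hm, sub_self]
      rw [h1, h2, hd0, ← hv, Real.mul_self_sqrt hvarU.le]
      field_simp
      ring
end
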